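/- Let A be a unital C*-algebra and E a Hilbert C*-module over A. Let F be a subspace of E such that for every nonzero ζ ∈ F the inner product ⟪ζ, ζ⟫_A is invertible in A. Then every ξ ∈ E has at most one metric projection onto F: if ζ, ζ' ∈ F satisfy ‖ξ − ζ‖ = ‖ξ − ζ'‖ = dist(ξ, F), then ζ = ζ'. -/

import Mathlib

/-- In a unital C*-algebra, `algebraMap ℝ A` of a nonnegative real is nonnegative. -/
lemma algebraMap_real_nonneg_aux {A : Type*} [CStarAlgebra A] [PartialOrder A]
    [StarOrderedRing A] {r : ℝ} (hr : 0 ≤ r) : (0:A) ≤ algebraMap ℝ A r := by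
  rw [show r = Real.sqrt r * Real.sqrt r from (Real.mul_self_sqrt hr).symm, map_mul]
  have h := star_mul_self_nonneg (algebraMap ℝ A (Real.sqrt r))
  rwa [show star (algebraMap ℝ A (Real.sqrt r)) = algebraMap ℝ A (Real.sqrt r) from
    (IsSelfAdjoint.algebraMap A (isSelfAdjoint_iff.mpr rfl))] at h

open CStarModule

/-- **Uniqueness of metric projections onto "invertible" subspaces of Hilbert C*-modules.**
Let `A` be a unital C*-algebra and `E` a Hilbert C*-module over `A`.  Let `F` be a subspace
of `E` such that for every nonzero `ζ ∈ F` the inner product `⟪ζ, ζ⟫_A` is invertible in `A`.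
Then every `ξ ∈ E` has at most one metric projection onto `F`: if `ζ, ζ' ∈ F` satisfy
`‖ξ − ζ‖ = ‖ξ − ζ'‖ = dist(ξ, F)`, then `ζ = ζ'`. -/
theorem stmt_0 {A E : Type*} [CStarAlgebra A] [PartialOrder A] [StarOrderedRing A]
    [SMul A E] [NormedAddCommGroup E] [NormedSpace ℂ E] [CStarModule A E]
    (F : Submodule ℂ E)
    (hF : ∀ ζ : E, ζ ∈ F → ζ ≠ 0 → IsUnit (inner (𝕜 := A) ζ ζ))
    (ξ ζ ζ' : E) (hζ : ζ ∈ F) (hζ' : ζ' ∈ F)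
    (h1 : ‖ξ - ζ‖ = Metric.infDist ξ (F : Set E))
    (h2 : ‖ξ - ζ'‖ = Metric.infDist ξ (F : Set E)) :
    ζ = ζ' := by
  set d := Metric.infDist ξ (F : Set E) with hd
  have hd0 : 0 ≤ d := Metric.infDist_nonneg
  by_contra hne
  set δ := ζ' - ζ with hδdef
  have hδ : δ ≠ 0 := sub_ne_zero.mpr (Ne.symm hne)
  have hδF : δ ∈ F := F.sub_mem hζ' hζ
  have hunit : IsUnit (inner (𝕜 := A) δ δ) := hF δ hδF hδ
  have hδself : (0:A) ≤ inner (𝕜 := A) δ δ := inner_self_nonneg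
  have hδne : inner (𝕜 := A) δ δ ≠ 0 := fun h => hδ (inner_self.mp h)
  have : Nontrivial A := nontrivial_of_ne _ _ hδne
  -- d > 0 (otherwise ξ = ζ = ζ')
  have hdpos : 0 < d := by
    rcases hd0.lt_or_eq with h | h
    · exact h
    · exact absurd ((sub_eq_zero.mp (by rw [← norm_eq_zero, h1, ← h])).symm.trans
        (sub_eq_zero.mp (by rw [← norm_eq_zero, h2, ← h]))) hne
  -- invertible positive element dominates a positive multiple of 1
  obtain ⟨r, hrpos, hrle⟩ : ∃ r > 0, algebraMap ℝ A r ≤ inner (𝕜 := A) δ δ := by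
    rw [CFC.exists_pos_algebraMap_le_iff (IsSelfAdjoint.of_nonneg hδself)]
    intro x hx
    refine lt_of_le_of_ne (spectrum_nonneg_of_nonneg hδself hx) ?_
    intro h0
    exact spectrum.zero_notMem ℝ hunit (h0 ▸ hx)
  -- shrink r so that r ≤ 2 d ^ 2
  set r' := min r (2 * d ^ 2) with hr'
  have hr'pos : 0 < r' := lt_min hrpos (by positivity)
  have hr'le : algebraMap ℝ A r' ≤ inner (𝕜 := A) δ δ := by
    refine le_trans ?_ hrle
    rw [← sub_nonneg, ← map_sub]
    exact algebraMap_real_nonneg_aux (by simp [hr'])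
  -- midpoint
  set x := ξ - ζ with hx
  set y := ξ - ζ' with hy
  set m := (2⁻¹ : ℝ) • (ζ + ζ') with hm
  have hmF : m ∈ F := F.smul_of_tower_mem _ (F.add_mem hζ hζ')
  have hdm : d ≤ ‖ξ - m‖ := by
    rw [← dist_eq_norm]
    exact Metric.infDist_le_dist_of_mem hmF
  have h2t : (2⁻¹ : ℝ) • (ζ + ζ') + (2⁻¹ : ℝ) • (ζ + ζ') = ζ + ζ' := by
    rw [← two_smul ℝ, smul_smul]; norm_num
  have e1 : x + y = (ξ - m) + (ξ - m) := by
    calc x + y = ξ + ξ - (ζ + ζ') := by rw [hx, hy]; abel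
      _ = ξ + ξ - (m + m) := by rw [hm, h2t]
      _ = (ξ - m) + (ξ - m) := by abel
  have e2 : x - y = δ := by rw [hx, hy, hδdef]; abel
  -- parallelogram law
  have par : inner (𝕜 := A) (x + y) (x + y) + inner (𝕜 := A) (x - y) (x - y)
      = (inner (𝕜 := A) x x + inner (𝕜 := A) x x)
        + (inner (𝕜 := A) y y + inner (𝕜 := A) y y) := by
    simp only [CStarModule.inner_add_left, CStarModule.inner_add_right, CStarModule.inner_sub_left, CStarModule.inner_sub_right]
    abel
  have eδ : inner (𝕜 := A) (x - y) (x - y) = inner (𝕜 := A) δ δ := by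
    rw [e2]
  -- each inner product is ≤ d^2 · 1
  have hb : ∀ z : E, ‖z‖ = d → inner (𝕜 := A) z z ≤ algebraMap ℝ A (d ^ 2) := by
    intro z hz
    have h := IsSelfAdjoint.le_algebraMap_norm_self (a := inner (𝕜 := A) z z)
      isSelfAdjoint_inner_self
    rwa [← norm_sq_eq, hz] at h
  -- key estimate
  have hkey : inner (𝕜 := A) (x + y) (x + y) ≤ algebraMap ℝ A (4 * d ^ 2 - r') := by
    have hsum : inner (𝕜 := A) (x + y) (x + y) + inner (𝕜 := A) δ δ
        ≤ algebraMap ℝ A (4 * d ^ 2) := by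
      rw [← eδ, par]
      calc inner (𝕜 := A) x x + inner (𝕜 := A) x x + (inner (𝕜 := A) y y + inner (𝕜 := A) y y)
          ≤ algebraMap ℝ A (d ^ 2) + algebraMap ℝ A (d ^ 2)
            + (algebraMap ℝ A (d ^ 2) + algebraMap ℝ A (d ^ 2)) :=
            add_le_add (add_le_add (hb x h1) (hb x h1)) (add_le_add (hb y h2) (hb y h2))
        _ = algebraMap ℝ A (4 * d ^ 2) := by
            rw [← map_add, ← map_add]; congr 1; ring
    calc inner (𝕜 := A) (x + y) (x + y)
        ≤ algebraMap ℝ A (4 * d ^ 2) - inner (𝕜 := A) δ δ := by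
          rwa [le_sub_iff_add_le]
      _ ≤ algebraMap ℝ A (4 * d ^ 2) - algebraMap ℝ A r' := by
          exact sub_le_sub_left hr'le _
      _ = algebraMap ℝ A (4 * d ^ 2 - r') := by rw [map_sub]
  -- take norms
  have hnorm_le : ‖inner (𝕜 := A) (x + y) (x + y)‖ ≤ 4 * d ^ 2 - r' := by
    have := CStarAlgebra.norm_le_norm_of_nonneg_of_le CStarModule.inner_self_nonneg hkey
    rwa [norm_algebraMap', Real.norm_of_nonneg (by
      have : r' ≤ 2 * d ^ 2 := min_le_right _ _
      nlinarith)] at this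
  have hnorm_ge : 4 * d ^ 2 ≤ ‖inner (𝕜 := A) (x + y) (x + y)‖ := by
    rw [← norm_sq_eq, e1, ← two_smul ℝ, norm_smul, Real.norm_ofNat]
    nlinarith
  linarith
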